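/- arXiv:1709.02359 — 2 statements merged into one kernel-verified Lean document; each statement's English description precedes it below -/
import Mathlib

section
/- For the periodic random walk on the N-dimensional hypercube, the number of index sequences (i₁,...,i_{2l}) ∈ {1,...,N}^{2l} realizing a first return in exactly 2l steps satisfies |J_l| ≤ 2 N^{2l-2}, since given the first 2l-2 coordinates, the last two coordinates are determined up to a permutation. -/
/-- The letters of the word `x` lying in index positions `a ≤ k ≤ b` all appear an even
number of times there. -/
def EvenOn {N L : ℕ} (x : Fin L → Fin N) (a b : ℕ) : Prop :=
  ∀ j : Fin N,
    Even ((Finset.univ.filter fun k : Fin L => a ≤ (k : ℕ) ∧ (k : ℕ) ≤ b ∧ x k = j)).card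

open scoped Classical in
/-- `Jset N l` is the set of index words `(i₁, …, i_{2l}) ∈ {1,…,N}^{2l}` realizing a
first return in exactly `2l` steps: every letter appears an even number of times, and no
proper contiguous subword other than the whole word has this property. -/
noncomputable def Jset (N l : ℕ) : Finset (Fin (2 * l) → Fin N) :=
  Finset.univ.filter fun x =>
    EvenOn x 0 (2 * l - 1) ∧
      ∀ a b : ℕ, a ≤ b → b ≤ 2 * l - 1 → (a, b) ≠ (0, 2 * l - 1) → ¬EvenOn x a b

section Aux

variable {N l : ℕ}

/-- The last two letters of a word in `Jset` are distinct. -/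
lemma aux_ne (hl : 2 ≤ l) (x : Fin (2 * l) → Fin N) (hx : x ∈ Jset N l)
    (hA : 2 * l - 2 < 2 * l) (hB : 2 * l - 1 < 2 * l) :
    x ⟨2 * l - 2, hA⟩ ≠ x ⟨2 * l - 1, hB⟩ := by
  classical
  simp only [Jset, Finset.mem_filter] at hx
  intro heq
  refine hx.2.2 (2 * l - 2) (2 * l - 1) (by omega) (le_refl _) (by simp; omega) ?_
  intro j
  have hset : (Finset.univ.filter fun k : Fin (2 * l) =>
      2 * l - 2 ≤ (k : ℕ) ∧ (k : ℕ) ≤ 2 * l - 1 ∧ x k = j) =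
      if x ⟨2 * l - 2, hA⟩ = j then {⟨2 * l - 2, hA⟩, ⟨2 * l - 1, hB⟩} else ∅ := by
    ext k
    have hk := k.isLt
    by_cases hj : x ⟨2 * l - 2, hA⟩ = j
    · simp only [hj, if_true, Finset.mem_filter, Finset.mem_univ, true_and,
        Finset.mem_insert, Finset.mem_singleton]
      constructor
      · rintro ⟨h1, h2, -⟩
        rcases (by omega : (k : ℕ) = 2 * l - 2 ∨ (k : ℕ) = 2 * l - 1) with h' | h'
        · exact Or.inl (Fin.ext h')
        · exact Or.inr (Fin.ext h')
      · rintro (rfl | rfl)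
        · exact ⟨le_refl _, by simp only [Fin.val_mk]; omega, hj⟩
        · exact ⟨by simp only [Fin.val_mk]; omega, le_refl _, heq ▸ hj⟩
    · simp only [hj, if_false, Finset.mem_filter, Finset.mem_univ, true_and,
        Finset.notMem_empty, iff_false]
      rintro ⟨h1, h2, h3⟩
      have : k = (⟨2 * l - 2, hA⟩ : Fin (2 * l)) ∨ k = ⟨2 * l - 1, hB⟩ := by
        rcases (by omega : (k : ℕ) = 2 * l - 2 ∨ (k : ℕ) = 2 * l - 1) with h' | h'
        · exact Or.inl (Fin.ext h')
        · exact Or.inr (Fin.ext h')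
      rcases this with rfl | rfl
      · exact hj h3
      · exact hj (heq ▸ h3)
  rw [hset]
  by_cases hj : x ⟨2 * l - 2, hA⟩ = j
  · rw [if_pos hj, Finset.card_insert_of_notMem (by simp [Fin.ext_iff]; omega),
      Finset.card_singleton]
    exact ⟨1, rfl⟩
  · rw [if_neg hj, Finset.card_empty]; exact Even.zero

/-- The total parity of each letter in a word of `Jset` is even, expressed in `ZMod 2`. -/
lemma aux_parity (hl : 2 ≤ l) (x : Fin (2 * l) → Fin N) (hx : x ∈ Jset N l) (j : Fin N) :
    (∑ k : Fin (2 * l), if x k = j then (1 : ZMod 2) else 0) = 0 := by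
  classical
  simp only [Jset, Finset.mem_filter] at hx
  have h := hx.2.1 j
  have hset : (Finset.univ.filter fun k : Fin (2 * l) =>
      0 ≤ (k : ℕ) ∧ (k : ℕ) ≤ 2 * l - 1 ∧ x k = j) =
      Finset.univ.filter fun k : Fin (2 * l) => x k = j := by
    apply Finset.filter_congr
    intro k _
    have hk := k.isLt
    constructor
    · rintro ⟨-, -, h3⟩; exact h3
    · intro h3; exact ⟨Nat.zero_le _, by omega, h3⟩
  rw [hset] at h
  obtain ⟨c, hc⟩ := h
  have : (∑ k : Fin (2 * l), if x k = j then (1 : ZMod 2) else 0) =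
      ((Finset.univ.filter fun k : Fin (2 * l) => x k = j).card : ZMod 2) := by
    rw [Finset.card_filter]
    push_cast
    rfl
  rw [this, hc, Nat.cast_add, ← two_mul, show (2 : ZMod 2) = 0 by decide, zero_mul]

end Aux

/-- `|J_l| ≤ 2 N^{2l-2}`: given the first `2l-2` coordinates, the last two coordinates are
determined up to a permutation. -/
theorem stmt1 (N l : ℕ) (hl : 2 ≤ l) :
    (Jset N l).card ≤ 2 * N ^ (2 * l - 2) := by
  classical
  have hA : 2 * l - 2 < 2 * l := by omega
  have hB : 2 * l - 1 < 2 * l := by omega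
  set A : Fin (2 * l) := ⟨2 * l - 2, hA⟩ with hAdef
  set B : Fin (2 * l) := ⟨2 * l - 1, hB⟩ with hBdef
  have hAB : A ≠ B := by simp [hAdef, hBdef, Fin.ext_iff]; omega
  set f : (Fin (2 * l) → Fin N) → (Fin (2 * l - 2) → Fin N) × Bool := fun x =>
    (fun i => x ⟨i.val, lt_of_lt_of_le i.2 (Nat.sub_le _ _)⟩, decide (x A < x B)) with hf
  -- split of the total sum
  have hsplit : ∀ (x : Fin (2 * l) → Fin N) (j : Fin N),
      (∑ k : Fin (2 * l), if x k = j then (1 : ZMod 2) else 0) =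
        (∑ k ∈ Finset.univ.filter fun k : Fin (2 * l) => (k : ℕ) < 2 * l - 2,
          if x k = j then (1 : ZMod 2) else 0) +
        ((if x A = j then (1 : ZMod 2) else 0) + (if x B = j then (1 : ZMod 2) else 0)) := by
    intro x j
    rw [← Finset.sum_filter_add_sum_filter_not Finset.univ
      (fun k : Fin (2 * l) => (k : ℕ) < 2 * l - 2)]
    congr 1
    have : (Finset.univ.filter fun k : Fin (2 * l) => ¬ (k : ℕ) < 2 * l - 2) = {A, B} := by
      ext k
      have hk := k.isLt
      simp only [Finset.mem_filter, Finset.mem_univ, true_and, Finset.mem_insert,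
        Finset.mem_singleton, Fin.ext_iff, hAdef, hBdef, not_lt]
      omega
    rw [this, Finset.sum_pair hAB]
  have hinj : Set.InjOn f (Jset N l) := by
    intro x hx y hy hxy
    have hxne := aux_ne hl x hx hA hB
    have hyne := aux_ne hl y hy hA hB
    have hr : ∀ i : Fin (2 * l - 2), x ⟨i.val, lt_of_lt_of_le i.2 (Nat.sub_le _ _)⟩ =
        y ⟨i.val, lt_of_lt_of_le i.2 (Nat.sub_le _ _)⟩ := fun i =>
      congrFun (congrArg Prod.fst hxy) i
    have hbit : decide (x A < x B) = decide (y A < y B) := congrArg Prod.snd hxy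
    -- the "tail parity" of each letter agrees
    have htail : ∀ j : Fin N,
        ((if x A = j then (1 : ZMod 2) else 0) + (if x B = j then (1 : ZMod 2) else 0)) =
        ((if y A = j then (1 : ZMod 2) else 0) + (if y B = j then (1 : ZMod 2) else 0)) := by
      intro j
      have hhead : (∑ k ∈ Finset.univ.filter fun k : Fin (2 * l) => (k : ℕ) < 2 * l - 2,
          if x k = j then (1 : ZMod 2) else 0) =
          (∑ k ∈ Finset.univ.filter fun k : Fin (2 * l) => (k : ℕ) < 2 * l - 2,
          if y k = j then (1 : ZMod 2) else 0) := by
        apply Finset.sum_congr rfl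
        intro k hk
        simp only [Finset.mem_filter] at hk
        have := hr ⟨(k : ℕ), hk.2⟩
        have hkk : (⟨(k : ℕ), lt_of_lt_of_le (Fin.mk k.val hk.2).2 (Nat.sub_le _ _)⟩ :
            Fin (2 * l)) = k := Fin.ext rfl
        rw [hkk] at this
        rw [this]
      have e1 := aux_parity hl x hx j
      have e2 := aux_parity hl y hy j
      rw [hsplit x j] at e1
      rw [hsplit y j] at e2
      rw [hhead] at e1
      have := e1.trans e2.symm
      exact add_left_cancel this
    -- deduce the pair equality
    have hpair : y A = x A ∧ y B = x B := by
      have h1 := htail (x A)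
      have h2 := htail (x B)
      rw [if_pos rfl, if_neg (fun h => hxne h.symm)] at h1
      rw [if_neg hxne, if_pos rfl] at h2
      by_cases hyA : y A = x A
      · refine ⟨hyA, ?_⟩
        rw [if_neg (fun h : y A = x B => hxne (hyA ▸ h))] at h2
        by_cases hyB : y B = x B
        · exact hyB
        · rw [if_neg hyB] at h2; exact absurd h2 (by decide)
      · -- then y B = x A and y A = x B, contradicting the bit
        rw [if_neg hyA] at h1
        have hyB : y B = x A := by
          by_contra hc
          rw [if_neg hc] at h1
          exact absurd h1 (by decide)
        have hyA' : y A = x B := by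
          by_cases hc : y A = x B
          · exact hc
          · rw [if_neg hc] at h2
            by_cases hc2 : y B = x B
            · exact absurd (hyB.symm.trans hc2) hxne
            · rw [if_neg hc2] at h2; exact absurd h2 (by decide)
        rw [hyA', hyB] at hbit
        rcases lt_or_gt_of_ne hxne with h | h
        · simp [h, not_lt.mpr h.le, lt_asymm h] at hbit; exact absurd (hbit.mp h) (lt_asymm h)
        · simp [h, not_lt.mpr h.le, lt_asymm h] at hbit; exact absurd (hbit.mpr h) (lt_asymm h)
    -- conclude x = y
    funext k
    have hk := k.isLt
    by_cases hkm : (k : ℕ) < 2 * l - 2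
    · have := hr ⟨(k : ℕ), hkm⟩
      have hkk : (⟨(k : ℕ), lt_of_lt_of_le (Fin.mk k.val hkm).2 (Nat.sub_le _ _)⟩ :
          Fin (2 * l)) = k := Fin.ext rfl
      rw [hkk] at this
      exact this
    · have : k = A ∨ k = B := by
        rcases (by omega : (k : ℕ) = 2 * l - 2 ∨ (k : ℕ) = 2 * l - 1) with h' | h'
        · exact Or.inl (Fin.ext h')
        · exact Or.inr (Fin.ext h')
      rcases this with rfl | rfl
      · exact hpair.1.symm
      · exact hpair.2.symm
  calc (Jset N l).card ≤ (Finset.univ : Finset ((Fin (2 * l - 2) → Fin N) × Bool)).card :=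
        Finset.card_le_card_of_injOn f (fun x _ => Finset.mem_univ _) hinj
    _ = 2 * N ^ (2 * l - 2) := by
        rw [Finset.card_univ]
        simp [Fintype.card_fun]
        ring
end

section
/- If a limiting law of R_N/β_N exists and satisfies the asymptotic factorization lim_{N→∞} |P(R_N > β_N(t+s)) - P(R_N > β_N t) P(R_N > β_N s)| = 0 for all t, s > 0, together with lim_{N→∞} P(R_N ≥ β_N) = e^{-1} and lim_{N→∞} E(R_N/β_N) = 1, then for all real t > 0, lim_{N→∞} P(R_N > β_N t) = e^{-t}. -/
open MeasureTheory ProbabilityTheory Filter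

/-- Abstract identification of the exponential limit law. Let `R_N` be nonnegative random
variables and `β_N > 0` normalizing constants, and write `T N t = P(R_N > β_N t)`. If a
limiting law of `R_N / β_N` exists, the tails factorize asymptotically,
`P(R_N ≥ β_N) → e⁻¹`, and `E(R_N / β_N) → 1`, then for all real `t > 0`,
`lim_{N→∞} P(R_N > β_N t) = e^{-t}`. -/
theorem stmt13
    (Ω : ℕ → Type*) [∀ N, MeasurableSpace (Ω N)]
    (μ : ∀ N, Measure (Ω N)) [∀ N, IsProbabilityMeasure (μ N)]
    (R : ∀ N, Ω N → ℝ) (hR : ∀ N ω, 0 ≤ R N ω)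
    (hRmeas : ∀ N, Measurable (R N))
    (β : ℕ → ℝ) (hβ : ∀ N, 0 < β N)
    (hlim : ∀ t : ℝ, 0 < t →
      ∃ L : ℝ, Tendsto (fun N => (μ N {ω | β N * t < R N ω}).toReal) atTop (nhds L))
    (hmul : ∀ t s : ℝ, 0 < t → 0 < s →
      Tendsto (fun N =>
        |(μ N {ω | β N * (t + s) < R N ω}).toReal -
          (μ N {ω | β N * t < R N ω}).toReal * (μ N {ω | β N * s < R N ω}).toReal|)
        atTop (nhds 0))
    (hnorm : Tendsto (fun N => (μ N {ω | β N ≤ R N ω}).toReal) atTop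
      (nhds (Real.exp (-1))))
    (hmean : Tendsto (fun N => ∫ ω, R N ω / β N ∂μ N) atTop (nhds 1)) :
    ∀ t : ℝ, 0 < t →
      Tendsto (fun N => (μ N {ω | β N * t < R N ω}).toReal) atTop
        (nhds (Real.exp (-t))) := by
  classical
  have hPnn : ∀ N (t : ℝ), 0 ≤ (μ N {ω | β N * t < R N ω}).toReal :=
    fun N t => ENNReal.toReal_nonneg
  have hPmono : ∀ N (t s : ℝ), t ≤ s →
      (μ N {ω | β N * s < R N ω}).toReal ≤ (μ N {ω | β N * t < R N ω}).toReal := by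
    intro N t s hts
    refine ENNReal.toReal_mono (measure_ne_top _ _) (measure_mono ?_)
    intro ω hω
    exact lt_of_le_of_lt (mul_le_mul_of_nonneg_left hts (hβ N).le) hω
  choose L hL using hlim
  have hLcongr : ∀ (a b : ℝ) (ha : 0 < a) (hb : 0 < b), a = b → L a ha = L b hb := by
    intro a b ha hb h; subst h; rfl
  have hLnn : ∀ t (ht : 0 < t), 0 ≤ L t ht := fun t ht =>
    ge_of_tendsto' (hL t ht) (fun N => hPnn N t)
  have hLmono : ∀ t s (ht : 0 < t) (hs : 0 < s), t ≤ s → L s hs ≤ L t ht := fun t s ht hs hts =>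
    le_of_tendsto_of_tendsto' (hL s hs) (hL t ht) (fun N => hPmono N t s hts)
  have hLmul : ∀ t s (ht : 0 < t) (hs : 0 < s) (hts : 0 < t + s),
      L (t + s) hts = L t ht * L s hs := by
    intro t s ht hs hts
    have h1 : Tendsto (fun N => (μ N {ω | β N * (t+s) < R N ω}).toReal -
        (μ N {ω | β N * t < R N ω}).toReal * (μ N {ω | β N * s < R N ω}).toReal) atTop
        (nhds (L (t+s) hts - L t ht * L s hs)) :=
      (hL (t+s) hts).sub ((hL t ht).mul (hL s hs))
    have h2 : Tendsto (fun N => (μ N {ω | β N * (t+s) < R N ω}).toReal -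
        (μ N {ω | β N * t < R N ω}).toReal * (μ N {ω | β N * s < R N ω}).toReal) atTop
        (nhds 0) := (tendsto_zero_iff_abs_tendsto_zero _).mpr (hmul t s ht hs)
    have := tendsto_nhds_unique h1 h2
    linarith
  have hLpow : ∀ n : ℕ, 1 ≤ n → ∀ (t : ℝ) (ht : 0 < t) (h : 0 < (n:ℝ) * t),
      L ((n:ℝ) * t) h = L t ht ^ n := by
    intro n hn
    induction n, hn using Nat.le_induction with
    | base =>
      intro t ht h
      rw [pow_one, hLcongr _ t _ ht (by push_cast; ring)]
    | succ n hn ih =>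
      intro t ht h
      have hn0 : (0:ℝ) < (n:ℝ) := by exact_mod_cast hn
      have hnt : 0 < (n:ℝ) * t := by positivity
      rw [hLcongr _ ((n:ℝ)*t + t) _ (by positivity) (by push_cast; ring),
        hLmul _ _ hnt ht _, ih t ht hnt, pow_succ]
  have hlo : ∀ t (ht : 0 < t), t < 1 → Real.exp (-1) ≤ L t ht := by
    intro t ht ht1
    refine le_of_tendsto_of_tendsto' hnorm (hL t ht) ?_
    intro N
    refine ENNReal.toReal_mono (measure_ne_top _ _) (measure_mono ?_)
    intro ω hω
    have : β N * t < β N := by nlinarith [hβ N]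
    exact lt_of_lt_of_le this hω
  have hhi : ∀ t (ht : 0 < t), 1 < t → L t ht ≤ Real.exp (-1) := by
    intro t ht ht1
    refine le_of_tendsto_of_tendsto' (hL t ht) hnorm ?_
    intro N
    refine ENNReal.toReal_mono (measure_ne_top _ _) (measure_mono ?_)
    intro ω hω
    have : β N ≤ β N * t := by nlinarith [hβ N]
    exact this.trans (le_of_lt hω)
  -- pin down L 1
  have key : ∀ m : ℕ,
      Real.exp (-1 + -(1/((m:ℝ)+1))) ≤ L 1 one_pos ∧
        L 1 one_pos ≤ Real.exp (-1 + 1/((m:ℝ)+1)) := by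
    intro m
    have hm1 : (0:ℝ) < (m:ℝ) + 1 := by positivity
    have hm2 : (0:ℝ) < (m:ℝ) + 2 := by positivity
    set u : ℝ := 1 / ((m:ℝ) + 2) with hu
    have hu0 : 0 < u := by positivity
    set A := L u hu0 with hA
    have hA0 : 0 ≤ A := hLnn u hu0
    -- L 1 = A ^ (m+2)
    have e1 : L 1 one_pos = A ^ (m+2) := by
      have hc : ((m+2:ℕ):ℝ) * u = 1 := by push_cast [hu]; field_simp
      rw [hLcongr 1 (((m+2:ℕ):ℝ) * u) one_pos (by rw [hc]; exact one_pos) hc.symm]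
      exact hLpow (m+2) (by omega) u hu0 _
    -- exp(-1) ≤ A^(m+1)
    have e2 : Real.exp (-1) ≤ A ^ (m+1) := by
      have hp : 0 < ((m+1:ℕ):ℝ) * u := by positivity
      have hlt : ((m+1:ℕ):ℝ) * u < 1 := by
        push_cast [hu]
        rw [mul_one_div, div_lt_one hm2]
        linarith
      have := hlo _ hp hlt
      rwa [hLpow (m+1) (by omega) u hu0 hp] at this
    -- A^(m+3) ≤ exp(-1)
    have e3 : A ^ (m+3) ≤ Real.exp (-1) := by
      have hp : 0 < ((m+3:ℕ):ℝ) * u := by positivity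
      have hgt : 1 < ((m+3:ℕ):ℝ) * u := by
        push_cast [hu]
        rw [mul_one_div, lt_div_iff₀ hm2]
        linarith
      have := hhi _ hp hgt
      rwa [hLpow (m+3) (by omega) u hu0 hp] at this
    -- lower bound on A
    have hAlow : Real.exp (-(1/((m:ℝ)+1))) ≤ A := by
      refine le_of_pow_le_pow_left₀ (n := m+1) (by omega) hA0 ?_
      calc Real.exp (-(1/((m:ℝ)+1))) ^ (m+1)
          = Real.exp (((m+1:ℕ):ℝ) * (-(1/((m:ℝ)+1)))) := (Real.exp_nat_mul _ _).symm
        _ = Real.exp (-1) := by congr 1; push_cast; field_simp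
        _ ≤ A ^ (m+1) := e2
    constructor
    · -- lower bound on L 1
      rw [e1, Real.exp_add]
      calc Real.exp (-1) * Real.exp (-(1/((m:ℝ)+1)))
          ≤ A ^ (m+1) * A := by
            exact mul_le_mul e2 hAlow (Real.exp_pos _).le (pow_nonneg hA0 _)
        _ = A ^ (m+2) := by rw [← pow_succ]
    · -- upper bound on L 1
      rw [e1]
      have h1 : A ^ (m+2) * Real.exp (-(1/((m:ℝ)+1))) ≤ Real.exp (-1) := by
        calc A ^ (m+2) * Real.exp (-(1/((m:ℝ)+1)))
            ≤ A ^ (m+2) * A := mul_le_mul_of_nonneg_left hAlow (pow_nonneg hA0 _)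
          _ = A ^ (m+3) := by rw [← pow_succ]
          _ ≤ Real.exp (-1) := e3
      have h2 : A ^ (m+2) ≤ Real.exp (-1) / Real.exp (-(1/((m:ℝ)+1))) :=
        (le_div_iff₀ (Real.exp_pos _)).mpr h1
      calc A ^ (m+2) ≤ Real.exp (-1) / Real.exp (-(1/((m:ℝ)+1))) := h2
        _ = Real.exp (-1 + 1/((m:ℝ)+1)) := by
            rw [← Real.exp_sub]; congr 1; ring
  have hinv : Tendsto (fun m : ℕ => 1/((m:ℝ)+1)) atTop (nhds 0) :=
    tendsto_one_div_add_atTop_nhds_zero_nat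
  have hc : L 1 one_pos = Real.exp (-1) := by
    have t1 : Tendsto (fun m : ℕ => Real.exp (-1 + -(1/((m:ℝ)+1)))) atTop
        (nhds (Real.exp (-1))) := by
      have : Tendsto (fun m : ℕ => -1 + -(1/((m:ℝ)+1))) atTop (nhds (-1 + -0)) :=
        tendsto_const_nhds.add hinv.neg
      simpa [Function.comp_def] using (Real.continuous_exp.tendsto _).comp this
    have t2 : Tendsto (fun m : ℕ => Real.exp (-1 + 1/((m:ℝ)+1))) atTop
        (nhds (Real.exp (-1))) := by
      have : Tendsto (fun m : ℕ => -1 + 1/((m:ℝ)+1)) atTop (nhds (-1 + 0)) :=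
        tendsto_const_nhds.add hinv
      simpa [Function.comp_def] using (Real.continuous_exp.tendsto _).comp this
    exact le_antisymm (ge_of_tendsto' t2 (fun m => (key m).2))
      (le_of_tendsto' t1 (fun m => (key m).1))
  have hLnat : ∀ k : ℕ, 1 ≤ k → ∀ (h : 0 < (k:ℝ)), L (k:ℝ) h = Real.exp (-(k:ℝ)) := by
    intro k hk h
    have h1 : 0 < (k:ℝ) * 1 := by rw [mul_one]; exact h
    rw [hLcongr (k:ℝ) ((k:ℝ) * 1) h h1 (by ring), hLpow k hk 1 one_pos h1, hc,
      ← Real.exp_nat_mul]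
    congr 1; ring
  -- final squeeze
  intro t ht
  set x := L t ht with hx
  have hx0 : 0 ≤ x := hLnn t ht
  have upper : ∀ n : ℕ, 1 ≤ n → 1 ≤ (n:ℝ) * t → x ≤ Real.exp (-t + 1/(n:ℝ)) := by
    intro n hn hnt1
    have hn0 : (0:ℝ) < (n:ℝ) := by exact_mod_cast hn
    have hnt : 0 < (n:ℝ) * t := by positivity
    set m : ℕ := ⌊(n:ℝ) * t⌋₊ with hm
    have hm1 : 1 ≤ m := Nat.le_floor (by exact_mod_cast hnt1)
    have hmR : (0:ℝ) < (m:ℝ) := by exact_mod_cast hm1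
    have hmle : (m:ℝ) ≤ (n:ℝ) * t := Nat.floor_le hnt.le
    have hmge : (n:ℝ) * t - 1 ≤ (m:ℝ) := by
      have := Nat.lt_floor_add_one ((n:ℝ) * t); linarith
    have step : x ^ n ≤ Real.exp (-(m:ℝ)) := by
      rw [← hLpow n hn t ht hnt, ← hLnat m hm1 hmR]
      exact hLmono (m:ℝ) ((n:ℝ)*t) hmR hnt hmle
    refine le_of_pow_le_pow_left₀ (Nat.one_le_iff_ne_zero.mp hn) (Real.exp_pos _).le ?_
    calc x ^ n ≤ Real.exp (-(m:ℝ)) := step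
      _ ≤ Real.exp ((n:ℝ) * (-t + 1/(n:ℝ))) := by
          apply Real.exp_le_exp.mpr
          have : (n:ℝ) * (-t + 1/(n:ℝ)) = -((n:ℝ)*t) + 1 := by field_simp
          rw [this]; linarith
      _ = Real.exp (-t + 1/(n:ℝ)) ^ n := Real.exp_nat_mul _ _
  have lower : ∀ n : ℕ, 1 ≤ n → Real.exp (-t + -(1/(n:ℝ))) ≤ x := by
    intro n hn
    have hn0 : (0:ℝ) < (n:ℝ) := by exact_mod_cast hn
    have hnt : 0 < (n:ℝ) * t := by positivity
    set m : ℕ := ⌊(n:ℝ) * t⌋₊ + 1 with hm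
    have hm1 : 1 ≤ m := by omega
    have hmR : (0:ℝ) < (m:ℝ) := by exact_mod_cast hm1
    have hmgt : (n:ℝ) * t ≤ (m:ℝ) := by
      have := Nat.lt_floor_add_one ((n:ℝ) * t); push_cast [hm]; linarith
    have hmle : (m:ℝ) ≤ (n:ℝ) * t + 1 := by
      have := Nat.floor_le hnt.le; push_cast [hm]; linarith
    have step : Real.exp (-(m:ℝ)) ≤ x ^ n := by
      rw [← hLpow n hn t ht hnt, ← hLnat m hm1 hmR]
      exact hLmono ((n:ℝ)*t) (m:ℝ) hnt hmR hmgt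
    refine le_of_pow_le_pow_left₀ (Nat.one_le_iff_ne_zero.mp hn) hx0 ?_
    calc Real.exp (-t + -(1/(n:ℝ))) ^ n
        = Real.exp ((n:ℝ) * (-t + -(1/(n:ℝ)))) := (Real.exp_nat_mul _ _).symm
      _ ≤ Real.exp (-(m:ℝ)) := by
          apply Real.exp_le_exp.mpr
          have : (n:ℝ) * (-t + -(1/(n:ℝ))) = -((n:ℝ)*t) - 1 := by field_simp; ring
          rw [this]; linarith
      _ ≤ x ^ n := step
  have hinv' : Tendsto (fun n : ℕ => 1/(n:ℝ)) atTop (nhds 0) :=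
    tendsto_one_div_atTop_nhds_zero_nat
  have hxle : x ≤ Real.exp (-t) := by
    have tU : Tendsto (fun n : ℕ => Real.exp (-t + 1/(n:ℝ))) atTop (nhds (Real.exp (-t))) := by
      have : Tendsto (fun n : ℕ => -t + 1/(n:ℝ)) atTop (nhds (-t + 0)) :=
        tendsto_const_nhds.add hinv'
      simpa [Function.comp_def] using (Real.continuous_exp.tendsto _).comp this
    refine ge_of_tendsto tU ?_
    have hev : ∀ᶠ n : ℕ in atTop, 1 ≤ n ∧ 1 ≤ (n:ℝ) * t := by
      filter_upwards [eventually_ge_atTop (max 1 (⌈1/t⌉₊ + 1))] with n hn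
      have h1 : 1 ≤ n := le_trans (le_max_left _ _) hn
      have h2 : ⌈1/t⌉₊ + 1 ≤ n := le_trans (le_max_right _ _) hn
      refine ⟨h1, ?_⟩
      have : (1:ℝ)/t ≤ (n:ℝ) := le_trans (Nat.le_ceil _) (by exact_mod_cast Nat.le_of_succ_le h2)
      calc (1:ℝ) = (1/t) * t := by field_simp
        _ ≤ (n:ℝ) * t := mul_le_mul_of_nonneg_right this ht.le
    filter_upwards [hev] with n hn
    exact upper n hn.1 hn.2
  have hxge : Real.exp (-t) ≤ x := by
    have tL : Tendsto (fun n : ℕ => Real.exp (-t + -(1/(n:ℝ)))) atTop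
        (nhds (Real.exp (-t))) := by
      have : Tendsto (fun n : ℕ => -t + -(1/(n:ℝ))) atTop (nhds (-t + -0)) :=
        tendsto_const_nhds.add hinv'.neg
      simpa [Function.comp_def] using (Real.continuous_exp.tendsto _).comp this
    refine le_of_tendsto tL ?_
    filter_upwards [eventually_ge_atTop 1] with n hn
    exact lower n hn
  have : Real.exp (-t) = L t ht := le_antisymm hxge hxle
  rw [this]
  exact hL t ht
end
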